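/- Let n ≥ 1 and let ρ : ℝ → ℝ be a measurable function such that z ↦ z^k ρ(z) is Lebesgue integrable on ℝ for all 0 ≤ k ≤ 2n−2. Then the Hankel determinant det(∫_ℝ z^{i+j} ρ(z) dz)_{0≤i,j≤n−1} equals (1/n!) ∫_{ℝ^n} Δ_n(z)^2 ∏_{ℓ=1}^n ρ(z_ℓ) dz_1 ⋯ dz_n, where Δ_n(z) = ∏_{1≤j<k≤n}(z_k − z_j). -/

import Mathlib

open MeasureTheory

section Aux

variable {n : ℕ} {ρ : ℝ → ℝ}

private lemma hankel_exp_le (hn : 1 ≤ n) (σ τ : Equiv.Perm (Fin n)) (i : Fin n) :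
    (σ i : ℕ) + (τ i : ℕ) ≤ 2 * n - 2 := by
  have h1 := (σ i).isLt
  have h2 := (τ i).isLt
  omega

/-- The Vandermonde product as a sum over permutations, coordinate-wise. -/
private lemma vandermonde_expand (z : Fin n → ℝ) :
    (∏ j : Fin n, ∏ k ∈ Finset.Ioi j, (z k - z j))
      = ∑ σ : Equiv.Perm (Fin n),
          ((Equiv.Perm.sign σ : ℤ) : ℝ) * ∏ i : Fin n, z i ^ (σ i : ℕ) := by
  rw [← Matrix.det_vandermonde z, ← Matrix.det_transpose, Matrix.det_apply']
  simp [Matrix.vandermonde]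

end Aux

/-- for a single measurable weight `ρ` on `ℝ` with integrable moments
up to order `2n-2`, the Hankel determinant `det (∫ z^{i+j} ρ z dz)` equals
`(1/n!) ∫_{ℝ^n} Δₙ(z)² ∏ ρ(z_ℓ) dz`, where `Δₙ(z) = ∏_{j<k} (z k − z j)`. -/
theorem hankel_det_eq_integral
    (n : ℕ) (hn : 1 ≤ n) (ρ : ℝ → ℝ) (hmeas : Measurable ρ)
    (hint : ∀ k : ℕ, k ≤ 2 * n - 2 → Integrable (fun z : ℝ => z ^ k * ρ z)) :
    Matrix.det (Matrix.of fun i j : Fin n =>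
        ∫ z : ℝ, z ^ ((i : ℕ) + (j : ℕ)) * ρ z)
      = (1 / n.factorial : ℝ) *
          ∫ z : Fin n → ℝ,
            (∏ j : Fin n, ∏ k ∈ Finset.Ioi j, (z k - z j)) ^ 2 *
              ∏ ℓ : Fin n, ρ (z ℓ) := by
  classical
  set m : ℕ → ℝ := fun k => ∫ z : ℝ, z ^ k * ρ z with hm
  -- Step 1: pointwise expansion of the integrand
  have h1 : ∀ z : Fin n → ℝ,
      (∏ j : Fin n, ∏ k ∈ Finset.Ioi j, (z k - z j)) ^ 2 * ∏ ℓ : Fin n, ρ (z ℓ)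
        = ∑ σ : Equiv.Perm (Fin n), ∑ τ : Equiv.Perm (Fin n),
            ((Equiv.Perm.sign σ : ℤ) : ℝ) * ((Equiv.Perm.sign τ : ℤ) : ℝ) *
              ∏ i : Fin n, (z i ^ ((σ i : ℕ) + (τ i : ℕ)) * ρ (z i)) := by
    intro z
    rw [vandermonde_expand z, sq, Finset.sum_mul_sum, Finset.sum_mul]
    refine Finset.sum_congr rfl fun σ _ => ?_
    rw [Finset.sum_mul]
    refine Finset.sum_congr rfl fun τ _ => ?_
    have : ∏ i : Fin n, (z i ^ ((σ i : ℕ) + (τ i : ℕ)) * ρ (z i))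
        = ((∏ i : Fin n, z i ^ (σ i : ℕ)) * ∏ i : Fin n, z i ^ (τ i : ℕ))
            * ∏ i : Fin n, ρ (z i) := by
      simp_rw [pow_add]
      rw [Finset.prod_mul_distrib, Finset.prod_mul_distrib]
    rw [this]; ring
  -- Step 2: integrability of each term
  have hintP : ∀ σ τ : Equiv.Perm (Fin n),
      Integrable (fun z : Fin n → ℝ =>
        ∏ i : Fin n, (z i ^ ((σ i : ℕ) + (τ i : ℕ)) * ρ (z i))) := fun σ τ =>
    Integrable.fintype_prod (f := fun i (x : ℝ) => x ^ ((σ i : ℕ) + (τ i : ℕ)) * ρ x)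
      (fun i => hint _ (hankel_exp_le hn σ τ i))
  -- Step 3: compute the integral
  have h2 : (∫ z : Fin n → ℝ,
        (∏ j : Fin n, ∏ k ∈ Finset.Ioi j, (z k - z j)) ^ 2 * ∏ ℓ : Fin n, ρ (z ℓ))
      = ∑ σ : Equiv.Perm (Fin n), ∑ τ : Equiv.Perm (Fin n),
          ((Equiv.Perm.sign σ : ℤ) : ℝ) * ((Equiv.Perm.sign τ : ℤ) : ℝ) *
            ∏ i : Fin n, m ((σ i : ℕ) + (τ i : ℕ)) := by
    simp_rw [h1]
    rw [integral_finset_sum _ (fun σ _ =>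
      integrable_finset_sum _ (fun τ _ => ((hintP σ τ).const_mul _)))]
    refine Finset.sum_congr rfl fun σ _ => ?_
    rw [integral_finset_sum _ (fun τ _ => ((hintP σ τ).const_mul _))]
    refine Finset.sum_congr rfl fun τ _ => ?_
    rw [integral_const_mul]
    congr 1
    exact integral_fintype_prod_eq_prod
      (f := fun i (x : ℝ) => x ^ ((σ i : ℕ) + (τ i : ℕ)) * ρ x)
  -- Step 4: the determinant as a sum over permutations
  have hdet : Matrix.det (Matrix.of fun i j : Fin n =>
        ∫ z : ℝ, z ^ ((i : ℕ) + (j : ℕ)) * ρ z)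
      = ∑ σ : Equiv.Perm (Fin n),
          ((Equiv.Perm.sign σ : ℤ) : ℝ) * ∏ i : Fin n, m ((σ i : ℕ) + (i : ℕ)) := by
    rw [Matrix.det_apply']
    rfl
  -- Step 5: the combinatorial identity
  have h3 : ∀ τ : Equiv.Perm (Fin n),
      (∑ σ : Equiv.Perm (Fin n),
          ((Equiv.Perm.sign σ : ℤ) : ℝ) * ∏ i : Fin n, m ((σ i : ℕ) + (τ i : ℕ)))
        = ((Equiv.Perm.sign τ : ℤ) : ℝ) *
            ∑ σ : Equiv.Perm (Fin n),
              ((Equiv.Perm.sign σ : ℤ) : ℝ) * ∏ i : Fin n, m ((σ i : ℕ) + (i : ℕ)) := by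
    intro τ
    rw [Finset.mul_sum]
    rw [← Equiv.sum_comp (Equiv.mulRight τ)
      (fun σ : Equiv.Perm (Fin n) =>
        ((Equiv.Perm.sign σ : ℤ) : ℝ) * ∏ i : Fin n, m ((σ i : ℕ) + (τ i : ℕ)))]
    refine Finset.sum_congr rfl fun σ _ => ?_
    have hs : (((Equiv.Perm.sign (σ * τ) : ℤ)) : ℝ)
        = ((Equiv.Perm.sign τ : ℤ) : ℝ) * ((Equiv.Perm.sign σ : ℤ) : ℝ) := by
      rw [Equiv.Perm.sign_mul]
      push_cast
      ring
    have hp : ∏ i : Fin n, m (((σ * τ) i : ℕ) + (τ i : ℕ))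
        = ∏ i : Fin n, m ((σ i : ℕ) + (i : ℕ)) := by
      rw [← Equiv.prod_comp τ (fun i => m ((σ i : ℕ) + (i : ℕ)))]
      rfl
    simp only [Equiv.coe_mulRight] at *
    rw [hs, hp, mul_assoc]
  rw [h2, hdet]
  -- swap the order of summation and apply h3
  rw [Finset.sum_comm]
  have h5 : ∀ τ : Equiv.Perm (Fin n),
      (∑ σ : Equiv.Perm (Fin n),
        ((Equiv.Perm.sign σ : ℤ) : ℝ) * ((Equiv.Perm.sign τ : ℤ) : ℝ) *
          ∏ i : Fin n, m ((σ i : ℕ) + (τ i : ℕ)))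
      = ∑ σ : Equiv.Perm (Fin n),
          ((Equiv.Perm.sign σ : ℤ) : ℝ) * ∏ i : Fin n, m ((σ i : ℕ) + (i : ℕ)) := by
    intro τ
    have := h3 τ
    calc (∑ σ : Equiv.Perm (Fin n),
        ((Equiv.Perm.sign σ : ℤ) : ℝ) * ((Equiv.Perm.sign τ : ℤ) : ℝ) *
          ∏ i : Fin n, m ((σ i : ℕ) + (τ i : ℕ)))
        = ((Equiv.Perm.sign τ : ℤ) : ℝ) * ∑ σ : Equiv.Perm (Fin n),
            ((Equiv.Perm.sign σ : ℤ) : ℝ) * ∏ i : Fin n, m ((σ i : ℕ) + (τ i : ℕ)) := by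
          rw [Finset.mul_sum]; refine Finset.sum_congr rfl fun σ _ => by ring
      _ = ((Equiv.Perm.sign τ : ℤ) : ℝ) * (((Equiv.Perm.sign τ : ℤ) : ℝ) *
            ∑ σ : Equiv.Perm (Fin n),
              ((Equiv.Perm.sign σ : ℤ) : ℝ) * ∏ i : Fin n, m ((σ i : ℕ) + (i : ℕ))) := by
          rw [this]
      _ = _ := by
          rw [← mul_assoc]
          have : ((Equiv.Perm.sign τ : ℤ) : ℝ) * ((Equiv.Perm.sign τ : ℤ) : ℝ) = 1 := by
            rw [← Int.cast_mul, ← Units.val_mul, Int.units_mul_self,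
              Units.val_one, Int.cast_one]
          rw [this, one_mul]
  rw [Finset.sum_congr rfl (fun τ _ => h5 τ), Finset.sum_const, Finset.card_univ,
    Fintype.card_perm, Fintype.card_fin, nsmul_eq_mul]
  have hfac : (n.factorial : ℝ) ≠ 0 := by positivity
  field_simp
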